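/- Let 0 ≤ α < h < β ≤ 1, let a ∈ ℕ with a ≥ 1 and b ∈ ℕ be fixed, and let f : [α, β] → ℝ be continuous. Then lim_{n→∞} Σ_{k : αn ≤ k ≤ βn, k ≡ b (mod a)} f(k/n) · C(n,k) h^k (1−h)^{n−k} = f(h)/a, where C(n,k) denotes the binomial coefficient. -/

import Mathlib

open Filter Topology

open scoped Classical

open Finset

open Filter Topology Finset

-- helper: total mass
private lemma sum_p' (h : ℝ) (n : ℕ) :
    ∑ k ∈ Finset.range (n+1), (n.choose k : ℝ) * h ^ k * (1-h) ^ (n-k) = 1 := by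
  have := add_pow h (1-h) n
  have h1 : h + (1-h) = 1 := by ring
  rw [h1, one_pow] at this
  calc ∑ k ∈ Finset.range (n+1), (n.choose k : ℝ) * h ^ k * (1-h) ^ (n-k)
      = ∑ k ∈ Finset.range (n+1), h ^ k * (1-h) ^ (n-k) * (n.choose k : ℝ) :=
        Finset.sum_congr rfl (fun k _ => by ring)
    _ = 1 := this.symm

-- helper: Chebyshev tail bound
private lemma cheb' (h : ℝ) (h0 : 0 ≤ h) (h1 : h ≤ 1) (δ : ℝ) (hδ : 0 < δ) (n : ℕ) (hn : 1 ≤ n) :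
    ∑ k ∈ (Finset.range (n+1)).filter (fun k : ℕ => δ ≤ |(k:ℝ)/n - h|),
      (n.choose k : ℝ) * h ^ k * (1-h) ^ (n-k) ≤ h*(1-h)/(δ^2*n) := by
  have hn0 : (0:ℝ) < n := by exact_mod_cast hn
  set x : unitInterval := ⟨h, ⟨h0, h1⟩⟩ with hx
  have V := bernstein.variance (n := n) (by exact_mod_cast hn0.ne') x
  have V' : ∑ k ∈ Finset.range (n+1), (h - (k:ℝ)/n)^2 *
      ((n.choose k : ℝ) * h ^ k * (1-h) ^ (n-k)) = h*(1-h)/n := by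
    rw [← Fin.sum_univ_eq_sum_range (fun k => (h - (k:ℝ)/n)^2 *
      ((n.choose k : ℝ) * h ^ k * (1-h) ^ (n-k))) (n+1)]
    rw [← V]
    exact Finset.sum_congr rfl (fun k _ => by
      rw [bernstein_apply]
      rfl)
  have h1' : 0 ≤ 1 - h := by linarith
  calc ∑ k ∈ (Finset.range (n+1)).filter (fun k : ℕ => δ ≤ |(k:ℝ)/n - h|),
        (n.choose k : ℝ) * h ^ k * (1-h) ^ (n-k)
      ≤ ∑ k ∈ (Finset.range (n+1)).filter (fun k : ℕ => δ ≤ |(k:ℝ)/n - h|),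
        ((h - (k:ℝ)/n)^2/δ^2) * ((n.choose k : ℝ) * h ^ k * (1-h) ^ (n-k)) := by
        apply Finset.sum_le_sum
        intro k hk
        have hk' : δ ≤ |(k:ℝ)/n - h| := (Finset.mem_filter.1 hk).2
        have hp : (0:ℝ) ≤ (n.choose k : ℝ) * h ^ k * (1-h) ^ (n-k) := by positivity
        have : 1 ≤ (h - (k:ℝ)/n)^2/δ^2 := by
          rw [le_div_iff₀ (by positivity), one_mul]
          have : δ^2 ≤ |(k:ℝ)/n - h|^2 := by
            apply pow_le_pow_left₀ hδ.le hk'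
          calc δ^2 ≤ |(k:ℝ)/n - h|^2 := this
            _ = (h - (k:ℝ)/n)^2 := by rw [sq_abs]; ring
        nlinarith
    _ ≤ ∑ k ∈ Finset.range (n+1),
        ((h - (k:ℝ)/n)^2/δ^2) * ((n.choose k : ℝ) * h ^ k * (1-h) ^ (n-k)) := by
        apply Finset.sum_le_sum_of_subset_of_nonneg (Finset.filter_subset _ _)
        intro k _ _
        positivity
    _ = (∑ k ∈ Finset.range (n+1),
        (h - (k:ℝ)/n)^2 * ((n.choose k : ℝ) * h ^ k * (1-h) ^ (n-k)))/δ^2 := by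
        rw [Finset.sum_div]
        exact Finset.sum_congr rfl (fun k _ => by ring)
    _ = (h*(1-h)/n)/δ^2 := by rw [V']
    _ = h*(1-h)/(δ^2*n) := by rw [div_div, mul_comm (n:ℝ)]


private lemma dvd_iff_mod' (a b k : ℕ) (ha : 1 ≤ a) :
    a ∣ (k + b*(a-1)) ↔ k % a = b % a := by
  haveI : NeZero a := ⟨by omega⟩
  rw [← ZMod.natCast_eq_zero_iff, ← ZMod.natCast_eq_natCast_iff']
  have hcast : ((a - 1 : ℕ) : ZMod a) = (a : ZMod a) - 1 := by
    have : a - 1 + 1 = a := by omega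
    have h2 : (((a-1) + 1 : ℕ) : ZMod a) = ((a : ℕ) : ZMod a) := by rw [this]
    push_cast at h2
    linear_combination h2
  push_cast [hcast, ZMod.natCast_self]
  constructor
  · intro hyp
    linear_combination hyp
  · intro hyp
    linear_combination hyp

private lemma norm_lt' (h : ℝ) (h0 : 0 < h) (h1 : h < 1) (z : ℂ) (hz : ‖z‖ = 1)
    (hz1 : z ≠ 1) : ‖(1 - (h:ℂ)) + (h:ℂ) * z‖ < 1 := by
  have hre : z.re < 1 := by
    rcases lt_or_eq_of_le (Complex.re_le_norm z) with hlt | heq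
    · rwa [hz] at hlt
    · exfalso
      have hnsq : Complex.normSq z = 1 := by
        rw [← Complex.sq_norm, hz]; norm_num
    -- z.re = 1 and re^2+im^2 = 1 → im = 0 → z = 1
      have : z.im = 0 := by
        have := Complex.normSq_apply z
        nlinarith [sq_nonneg z.im, heq, hz]
      exact hz1 (Complex.ext (by simp [heq, hz]) (by simp [this]))
  have hnsq : Complex.normSq z = 1 := by rw [← Complex.sq_norm, hz]; norm_num
  have key : Complex.normSq ((1 - (h:ℂ)) + (h:ℂ) * z) < 1 := by
    have w_re : ((1 - (h:ℂ)) + (h:ℂ) * z).re = 1 - h + h*z.re := by simp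
    have w_im : ((1 - (h:ℂ)) + (h:ℂ) * z).im = h*z.im := by simp
    rw [Complex.normSq_apply, w_re, w_im]
    have hns : z.re * z.re + z.im * z.im = 1 := by
      rw [← Complex.normSq_apply, hnsq]
    have hP : (0:ℝ) < h*(1-h)*(1-z.re) :=
      mul_pos (mul_pos h0 (by linarith)) (by linarith)
    have hid : (1 - h + h*z.re)*(1 - h + h*z.re) + (h*z.im)*(h*z.im)
        = 1 - 2*(h*(1-h)*(1-z.re)) := by linear_combination (h^2)*hns
    rw [hid]
    linarith
  have : ‖(1 - (h:ℂ)) + (h:ℂ) * z‖^2 < 1 := by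
    rw [← Complex.sq_norm] at key
    exact key
  nlinarith [norm_nonneg ((1 - (h:ℂ)) + (h:ℂ) * z)]

private lemma tendsto_T' (h : ℝ) (h0 : 0 < h) (h1 : h < 1) (a b : ℕ) (ha : 1 ≤ a) :
    Tendsto (fun n : ℕ => ∑ k ∈ (Finset.range (n+1)).filter (fun k => k % a = b % a),
      (n.choose k : ℝ) * h ^ k * (1-h) ^ (n-k)) atTop (𝓝 (1/a)) := by
  have ha0 : (a:ℂ) ≠ 0 := by exact_mod_cast (by omega : a ≠ 0)
  set ζ : ℂ := Complex.exp (2 * Real.pi * Complex.I / a) with hζdef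
  have hprim : IsPrimitiveRoot ζ a := Complex.isPrimitiveRoot_exp a (by omega)
  have hζa : ζ ^ a = 1 := hprim.pow_eq_one
  have habs : ‖ζ‖ = 1 := by
    have : ζ = Complex.exp (((2*Real.pi/a : ℝ):ℂ) * Complex.I) := by
      rw [hζdef]; congr 1; push_cast; ring
    rw [this, Complex.norm_exp_ofReal_mul_I]
  set c : ℕ := b * (a-1) with hc
  -- character sum identity
  have key : ∀ k : ℕ, (∑ j ∈ Finset.range a, ζ^((k + c)*j)) =
      if k % a = b % a then (a:ℂ) else 0 := by
    intro k
    have hdvd := dvd_iff_mod' a b k ha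
    by_cases hcond : k % a = b % a
    · rw [if_pos hcond]
      have hw : ζ^(k+c) = 1 := (hprim.pow_eq_one_iff_dvd _).2 (hdvd.2 hcond)
      calc ∑ j ∈ Finset.range a, ζ^((k + c)*j)
          = ∑ j ∈ Finset.range a, (1:ℂ) := by
            apply Finset.sum_congr rfl
            intro j _
            rw [pow_mul, hw, one_pow]
        _ = (a:ℂ) := by simp
    · rw [if_neg hcond]
      have hw : ζ^(k+c) ≠ 1 := fun e => hcond (hdvd.1 ((hprim.pow_eq_one_iff_dvd _).1 e))
      have : ∑ j ∈ Finset.range a, ζ^((k + c)*j) = ∑ j ∈ Finset.range a, (ζ^(k+c))^j := by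
        apply Finset.sum_congr rfl
        intro j _
        rw [pow_mul]
      rw [this, geom_sum_eq hw]
      have : (ζ^(k+c))^a = 1 := by
        rw [← pow_mul, mul_comm, pow_mul, hζa, one_pow]
      rw [this]
      simp
  -- key2 : a * T n = char-sum expression
  have key2 : ∀ n : ℕ, (a:ℂ) * ((∑ k ∈ (Finset.range (n+1)).filter (fun k => k % a = b % a),
      (n.choose k : ℝ) * h ^ k * (1-h) ^ (n-k) : ℝ) : ℂ) =
      ∑ j ∈ Finset.range a, ζ^(c*j) * (((h:ℂ) * ζ^j) + (1-(h:ℂ)))^n := by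
    intro n
    have e1 : ((∑ k ∈ (Finset.range (n+1)).filter (fun k => k % a = b % a),
        (n.choose k : ℝ) * h ^ k * (1-h) ^ (n-k) : ℝ) : ℂ) =
        ∑ k ∈ Finset.range (n+1), (if k % a = b % a then
          ((n.choose k : ℂ) * (h:ℂ) ^ k * (1-(h:ℂ)) ^ (n-k)) else 0) := by
      rw [Finset.sum_filter]
      push_cast [apply_ite (fun x : ℝ => (x:ℂ))]
      rfl
    rw [e1, Finset.mul_sum]
    have e2 : ∀ k ∈ Finset.range (n+1), (a:ℂ) * (if k % a = b % a then
        ((n.choose k : ℂ) * (h:ℂ) ^ k * (1-(h:ℂ)) ^ (n-k)) else 0) =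
        ∑ j ∈ Finset.range a, ζ^(c*j) * (((h:ℂ) * ζ^j)^k * (1-(h:ℂ))^(n-k) * (n.choose k : ℂ)) := by
      intro k _
      have : (a:ℂ) * (if k % a = b % a then
          ((n.choose k : ℂ) * (h:ℂ) ^ k * (1-(h:ℂ)) ^ (n-k)) else 0) =
          (∑ j ∈ Finset.range a, ζ^((k + c)*j)) *
          ((n.choose k : ℂ) * (h:ℂ) ^ k * (1-(h:ℂ)) ^ (n-k)) := by
        rw [key k]
        by_cases hcond : k % a = b % a <;> simp [hcond]
      rw [this, Finset.sum_mul]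
      apply Finset.sum_congr rfl
      intro j _
      have hexp : ζ^((k + c)*j) = (ζ^j)^k * ζ^(c*j) := by
        rw [add_mul, pow_add, mul_comm k j, pow_mul]
      rw [hexp]
      ring
    rw [Finset.sum_congr rfl e2, Finset.sum_comm]
    apply Finset.sum_congr rfl
    intro j _
    rw [← Finset.mul_sum, ← add_pow]
  -- the limit of the char-sum expression
  have key3 : Tendsto (fun n : ℕ => ∑ j ∈ Finset.range a,
      ζ^(c*j) * (((h:ℂ) * ζ^j) + (1-(h:ℂ)))^n) atTop (𝓝 1) := by
    have hsum : ∑ j ∈ Finset.range a, (if j = (0:ℕ) then (1:ℂ) else 0) = 1 := by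
      rw [Finset.sum_ite_eq' (Finset.range a) 0 (fun _ => (1:ℂ))]
      rw [if_pos (Finset.mem_range.2 (by omega : 0 < a))]
    have hterm : Tendsto (fun n : ℕ => ∑ j ∈ Finset.range a,
        ζ^(c*j) * (((h:ℂ) * ζ^j) + (1-(h:ℂ)))^n) atTop
        (𝓝 (∑ j ∈ Finset.range a, (if j = (0:ℕ) then (1:ℂ) else 0))) := by
      apply tendsto_finset_sum
      intro j hj
      by_cases hj0 : j = 0
      · subst hj0
        rw [if_pos rfl]
        have heq : ∀ n : ℕ, (1:ℂ) = ζ^(c*0) * (((h:ℂ) * ζ^0) + (1-(h:ℂ)))^n := by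
          intro n
          have : ((h:ℂ) * ζ^0) + (1-(h:ℂ)) = 1 := by rw [pow_zero]; ring
          rw [this, one_pow, mul_zero, pow_zero, one_mul]
        exact Tendsto.congr heq tendsto_const_nhds
      · rw [if_neg hj0]
        have hjlt : j < a := Finset.mem_range.1 hj
        have hζj : ζ^j ≠ 1 := hprim.pow_ne_one_of_pos_of_lt (by omega) hjlt
        have habsj : ‖ζ^j‖ = 1 := by
          rw [norm_pow, habs, one_pow]
        have hnorm : ‖((h:ℂ) * ζ^j) + (1-(h:ℂ))‖ < 1 := by
          have := norm_lt' h h0 h1 (ζ^j) habsj hζj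
          rwa [add_comm] at this
        have := (tendsto_pow_atTop_nhds_zero_of_norm_lt_one hnorm).const_mul (ζ^(c*j))
        simpa using this
    rwa [hsum] at hterm
  -- conclude over ℂ
  have key4 : Tendsto (fun n : ℕ => ((∑ k ∈ (Finset.range (n+1)).filter
      (fun k => k % a = b % a), (n.choose k : ℝ) * h ^ k * (1-h) ^ (n-k) : ℝ) : ℂ))
      atTop (𝓝 (1/(a:ℂ))) := by
    have h5 : Tendsto (fun n : ℕ => (a:ℂ) * ((∑ k ∈ (Finset.range (n+1)).filter
        (fun k => k % a = b % a), (n.choose k : ℝ) * h ^ k * (1-h) ^ (n-k) : ℝ) : ℂ))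
        atTop (𝓝 1) := by
      rw [tendsto_congr key2]
      exact key3
    have h6 := h5.const_mul (1/(a:ℂ))
    rw [mul_one] at h6
    convert h6 using 2 with n
    field_simp
  -- take real parts
  have h7 := (Complex.continuous_re.tendsto _).comp key4
  simp only [Function.comp_def] at h7
  have hre : ((1:ℂ)/(a:ℂ)).re = 1/(a:ℝ) := by
    rw [← Complex.ofReal_natCast, ← Complex.ofReal_one, ← Complex.ofReal_div,
      Complex.ofReal_re]
  rw [hre] at h7
  exact h7.congr (fun n => Complex.ofReal_re _)


/-- Binomial convolution asymptotics (Bernstein-type lemma): for `0 ≤ α < h < β ≤ 1`,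
`a ≥ 1`, `b ∈ ℕ` and `f` continuous on `[α, β]`,
`Σ_{αn ≤ k ≤ βn, k ≡ b [a]} f(k/n) C(n,k) h^k (1-h)^{n-k} → f(h)/a`. -/
theorem stmt7 (α β h : ℝ) (hα : 0 ≤ α) (hαh : α < h) (hhβ : h < β) (hβ : β ≤ 1)
    (a b : ℕ) (ha : 1 ≤ a) (f : ℝ → ℝ) (hf : ContinuousOn f (Set.Icc α β)) :
    Tendsto
      (fun n : ℕ =>
        ∑ k ∈ (Finset.range (n + 1)).filter
            (fun k : ℕ => α * n ≤ (k : ℝ) ∧ (k : ℝ) ≤ β * n ∧ k % a = b % a),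
          f ((k : ℝ) / n) * (n.choose k) * h ^ k * (1 - h) ^ (n - k))
      atTop (𝓝 (f h / a)) := by
  have h0 : 0 < h := hα.trans_lt hαh
  have h1 : h < 1 := hhβ.trans_le hβ
  set P : ℕ → ℕ → ℝ := fun n k => (n.choose k : ℝ) * h ^ k * (1-h) ^ (n-k) with hP
  have hPnn : ∀ n k, 0 ≤ P n k := by
    intro n k
    simp only [hP]
    have : (0:ℝ) ≤ 1 - h := by linarith
    positivity
  have hsum1 : ∀ n : ℕ, ∑ k ∈ Finset.range (n+1), P n k = 1 := by
    intro n; simp only [hP]; exact sum_p' h n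
  have hcheb : ∀ δ : ℝ, 0 < δ → ∀ n : ℕ, 1 ≤ n →
      ∑ k ∈ (Finset.range (n+1)).filter (fun k : ℕ => δ ≤ |(k:ℝ)/n - h|), P n k
        ≤ h*(1-h)/(δ^2*n) := by
    intro δ hδ n hn; simp only [hP]; exact cheb' h h0.le h1.le δ hδ n hn
  have hT : Tendsto (fun n : ℕ => ∑ k ∈ (Finset.range (n+1)).filter
      (fun k : ℕ => k % a = b % a), P n k) atTop (𝓝 (1/a)) := by
    simp only [hP]; exact tendsto_T' h h0 h1 a b ha
  -- bound and uniform continuity data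
  have hmemh : h ∈ Set.Icc α β := ⟨hαh.le, hhβ.le⟩
  obtain ⟨C, hC⟩ := isCompact_Icc.exists_bound_of_continuousOn hf
  have hC0 : 0 ≤ C := le_trans (norm_nonneg _) (hC h hmemh)
  have hu : UniformContinuousOn f (Set.Icc α β) :=
    isCompact_Icc.uniformContinuousOn_of_continuous hf
  rw [Metric.uniformContinuousOn_iff] at hu
  -- the error term tends to zero
  have main : Tendsto (fun n : ℕ =>
      (∑ k ∈ (Finset.range (n + 1)).filter
          (fun k : ℕ => α * n ≤ (k : ℝ) ∧ (k : ℝ) ≤ β * n ∧ k % a = b % a),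
        f ((k : ℝ) / n) * P n k) -
      f h * (∑ k ∈ (Finset.range (n+1)).filter (fun k : ℕ => k % a = b % a), P n k))
      atTop (𝓝 0) := by
    rw [Metric.tendsto_atTop]
    intro ε hε
    obtain ⟨δ1, hδ1, hδ1'⟩ := hu (ε/2) (by positivity)
    set δ : ℝ := min δ1 (min (h - α) (β - h)) with hδdef
    have hδ : 0 < δ := by
      apply lt_min hδ1
      apply lt_min <;> linarith
    have htail : Tendsto (fun n : ℕ => (2*C*(h*(1-h))/δ^2)/n) atTop (𝓝 0) :=
      tendsto_const_div_atTop_nhds_zero_nat _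
    have hev : ∀ᶠ n : ℕ in atTop, (2*C*(h*(1-h))/δ^2)/n < ε/2 :=
      htail.eventually (gt_mem_nhds (by positivity))
    obtain ⟨N1, hN1⟩ := eventually_atTop.1 hev
    refine ⟨max N1 1, fun n hn => ?_⟩
    have hn1 : 1 ≤ n := le_trans (le_max_right _ _) hn
    have hn0 : (0:ℝ) < n := by exact_mod_cast hn1
    rw [Real.dist_eq, sub_zero]
    set Q : ℕ → Prop := fun k : ℕ => α * n ≤ (k : ℝ) ∧ (k : ℝ) ≤ β * n ∧ k % a = b % a
      with hQdef
    set R : ℕ → Prop := fun k : ℕ => k % a = b % a with hRdef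
    -- rewrite difference as a single sum
    have e1 : (∑ k ∈ (Finset.range (n + 1)).filter Q, f ((k : ℝ) / n) * P n k) -
        f h * (∑ k ∈ (Finset.range (n+1)).filter R, P n k) =
        ∑ k ∈ Finset.range (n+1),
          ((if Q k then f ((k:ℝ)/n) else 0) - (if R k then f h else 0)) * P n k := by
      rw [Finset.mul_sum, Finset.sum_filter, Finset.sum_filter, ← Finset.sum_sub_distrib]
      apply Finset.sum_congr rfl
      intro k _
      by_cases hQk : Q k
      · have hRk : R k := hQk.2.2
        rw [if_pos hQk, if_pos hRk, if_pos hQk, if_pos hRk]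
        ring
      · by_cases hRk : R k
        · rw [if_neg hQk, if_pos hRk, if_neg hQk, if_pos hRk]
          ring
        · rw [if_neg hQk, if_neg hRk, if_neg hQk, if_neg hRk]
          ring
    rw [e1]
    -- pointwise bound
    have hpoint : ∀ k ∈ Finset.range (n+1),
        |((if Q k then f ((k:ℝ)/n) else 0) - (if R k then f h else 0)) * P n k| ≤
        (ε/2 + (if δ ≤ |(k:ℝ)/n - h| then 2*C else 0)) * P n k := by
      intro k hk
      rw [abs_mul, abs_of_nonneg (hPnn n k)]
      apply mul_le_mul_of_nonneg_right _ (hPnn n k)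
      by_cases hRk : R k
      · by_cases hQk : Q k
        · -- k/n ∈ [α, β]
          have hkn_mem : (k:ℝ)/n ∈ Set.Icc α β := by
            constructor
            · rw [le_div_iff₀ hn0]; exact hQk.1
            · rw [div_le_iff₀ hn0]; exact hQk.2.1
          rw [if_pos hQk, if_pos hRk]
          by_cases hfar : δ ≤ |(k:ℝ)/n - h|
          · rw [if_pos hfar]
            have := hC _ hkn_mem
            have := hC _ hmemh
            rw [Real.norm_eq_abs] at *
            calc |f ((k:ℝ)/n) - f h| ≤ |f ((k:ℝ)/n)| + |f h| := abs_sub _ _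
              _ ≤ ε/2 + 2*C := by linarith
          · rw [if_neg hfar]
            push_neg at hfar
            have hd : dist ((k:ℝ)/n) h < δ1 := by
              rw [Real.dist_eq]
              exact lt_of_lt_of_le hfar (min_le_left _ _)
            have := hδ1' _ hkn_mem _ hmemh hd
            rw [Real.dist_eq] at this
            linarith
        · -- k/n outside [α, β], so far from h
          rw [if_neg hQk, if_pos hRk]
          have hfar : δ ≤ |(k:ℝ)/n - h| := by
            have : ¬ (α * n ≤ (k:ℝ) ∧ (k:ℝ) ≤ β * n) := by
              intro hcon
              exact hQk ⟨hcon.1, hcon.2, hRk⟩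
            rw [not_and_or] at this
            rcases this with hlt | hlt <;> push_neg at hlt
            · -- k < α n, so k/n < α < h
              have hkn : (k:ℝ)/n < α := by rw [div_lt_iff₀ hn0]; linarith
              have : δ ≤ h - (k:ℝ)/n := by
                have : δ ≤ h - α := le_trans (min_le_right _ _) (min_le_left _ _)
                linarith
              rw [abs_sub_comm, abs_of_nonneg (by linarith)]
              linarith
            · have hkn : β < (k:ℝ)/n := by rw [lt_div_iff₀ hn0]; linarith
              have : δ ≤ β - h := le_trans (min_le_right _ _) (min_le_right _ _)
              rw [abs_of_nonneg (by linarith)]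
              linarith
          rw [if_pos hfar]
          have := hC _ hmemh
          rw [Real.norm_eq_abs] at this
          rw [zero_sub, abs_neg]
          linarith
      · have hQk : ¬ Q k := fun hcon => hRk hcon.2.2
        rw [if_neg hQk, if_neg hRk, sub_zero, abs_zero]
        have : (0:ℝ) ≤ if δ ≤ |(k:ℝ)/n - h| then 2*C else 0 := by
          split <;> linarith
        linarith
    -- sum the bound
    have e2 : ∑ k ∈ Finset.range (n+1),
        (ε/2 + (if δ ≤ |(k:ℝ)/n - h| then 2*C else 0)) * P n k =
        ε/2 * (∑ k ∈ Finset.range (n+1), P n k) +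
        2*C * (∑ k ∈ (Finset.range (n+1)).filter (fun k : ℕ => δ ≤ |(k:ℝ)/n - h|), P n k) := by
      rw [Finset.mul_sum, Finset.mul_sum, Finset.sum_filter, ← Finset.sum_add_distrib]
      apply Finset.sum_congr rfl
      intro k _
      by_cases hfar : δ ≤ |(k:ℝ)/n - h| <;> simp [hfar] <;> ring
    calc |∑ k ∈ Finset.range (n+1),
          ((if Q k then f ((k:ℝ)/n) else 0) - (if R k then f h else 0)) * P n k|
        ≤ ∑ k ∈ Finset.range (n+1),
          |((if Q k then f ((k:ℝ)/n) else 0) - (if R k then f h else 0)) * P n k| :=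
          Finset.abs_sum_le_sum_abs _ _
      _ ≤ ∑ k ∈ Finset.range (n+1),
          (ε/2 + (if δ ≤ |(k:ℝ)/n - h| then 2*C else 0)) * P n k :=
          Finset.sum_le_sum hpoint
      _ = ε/2 * (∑ k ∈ Finset.range (n+1), P n k) +
          2*C * (∑ k ∈ (Finset.range (n+1)).filter (fun k : ℕ => δ ≤ |(k:ℝ)/n - h|), P n k) := e2
      _ ≤ ε/2 * 1 + 2*C * (h*(1-h)/(δ^2*n)) := by
          have := hcheb δ hδ n hn1
          have hnn : (0:ℝ) ≤ 2*C := by linarith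
          have h2 := mul_le_mul_of_nonneg_left this hnn
          rw [hsum1 n]
          linarith
      _ = ε/2 + (2*C*(h*(1-h))/δ^2)/n := by ring
      _ < ε/2 + ε/2 := by
          have := hN1 n (le_trans (le_max_left _ _) hn)
          linarith
      _ = ε := by ring
  -- combine
  have final := main.add (hT.const_mul (f h))
  have : Tendsto (fun n : ℕ => ∑ k ∈ (Finset.range (n + 1)).filter
      (fun k : ℕ => α * n ≤ (k : ℝ) ∧ (k : ℝ) ≤ β * n ∧ k % a = b % a),
      f ((k : ℝ) / n) * P n k) atTop (𝓝 (f h / a)) := by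
    have heq : ∀ n : ℕ, ((∑ k ∈ (Finset.range (n + 1)).filter
        (fun k : ℕ => α * n ≤ (k : ℝ) ∧ (k : ℝ) ≤ β * n ∧ k % a = b % a),
        f ((k : ℝ) / n) * P n k) -
        f h * (∑ k ∈ (Finset.range (n+1)).filter (fun k : ℕ => k % a = b % a), P n k)) +
        f h * (∑ k ∈ (Finset.range (n+1)).filter (fun k : ℕ => k % a = b % a), P n k) =
        ∑ k ∈ (Finset.range (n + 1)).filter
        (fun k : ℕ => α * n ≤ (k : ℝ) ∧ (k : ℝ) ≤ β * n ∧ k % a = b % a),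
        f ((k : ℝ) / n) * P n k := fun n => sub_add_cancel _ _
    have hval : (0:ℝ) + f h * (1/a) = f h / a := by ring
    rw [← hval]
    exact final.congr heq
  apply this.congr
  intro n
  apply Finset.sum_congr rfl
  intro k _
  simp only [hP]
  ring
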